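/- Let I be a non-principal fractional ideal of F and let u = (u₁,u₂) be positive reals with u₁²·u₂²·N(I) = 1 (so the Arakelov divisor D = (I,u) has degree 0 and its class does not lie on the connected component 𝕋⁰). Then k⁰(I,u) < k⁰(D₀). -/

import Mathlib

open NumberField nonZeroDivisors MeasureTheory

noncomputable section

/-- `‖ux‖² = 2u₁²|σ(x)|² + 2u₂²|σ'(x)|²` for `u = (u₁, u₂)`. -/
def normSq2 {F : Type*} [Field F] (σ σ' : F →+* ℂ) (u₁ u₂ : ℝ) (x : F) : ℝ :=
  2 * u₁ ^ 2 * ‖σ x‖ ^ 2 + 2 * u₂ ^ 2 * ‖σ' x‖ ^ 2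

/-- `N(x) = |σ(x)|²·|σ'(x)|²`, the absolute value of the norm of `x`. -/
def absN {F : Type*} [Field F] (σ σ' : F →+* ℂ) (x : F) : ℝ :=
  ‖σ x‖ ^ 2 * ‖σ' x‖ ^ 2

/-- `ε` is a fundamental unit: every unit is `ζ · εᵏ` with `ζ` a root of unity. -/
def IsFundamentalUnit {F : Type*} [Field F] [NumberField F] (ε : (𝓞 F)ˣ) : Prop :=
  ∀ u : (𝓞 F)ˣ, ∃ (ζ : (𝓞 F)ˣ) (k : ℤ), (∃ n : ℕ, 0 < n ∧ ζ ^ n = 1) ∧ u = ζ * ε ^ k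

/-- `k⁰` of the Arakelov divisor `(I, (u₁, u₂))`. -/
def k0 {F : Type*} [Field F] [NumberField F] (σ σ' : F →+* ℂ)
    (I : FractionalIdeal (𝓞 F)⁰ F) (u₁ u₂ : ℝ) : ℝ :=
  ∑' x : (I : Submodule (𝓞 F) F), Real.exp (-Real.pi * normSq2 σ σ' u₁ u₂ x)

section Aux

/-- Packing bound: a finite μ-separated family inside the ball of radius R has few points. -/
lemma packing_count {α : Type*} (s : Finset α) (f : α → EuclideanSpace ℝ (Fin 4)) (μ R : ℝ)
    (hμ : 0 < μ) (hsep : ∀ a b, a ≠ b → μ ≤ dist (f a) (f b))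
    (hR : ∀ a ∈ s, ‖f a‖ < R) :
    (s.card : ℝ) * (μ / 2) ^ 4 ≤ (R + μ / 2) ^ 4 := by
  classical
  by_cases hs : s = ∅
  · simp [hs]
    positivity
  have hRpos : 0 < R := by
    obtain ⟨a, ha⟩ := Finset.nonempty_iff_ne_empty.mpr hs
    exact lt_of_le_of_lt (norm_nonneg _) (hR a ha)
  set c : ENNReal := ENNReal.ofReal (Real.sqrt Real.pi ^ 4 / Real.Gamma (4 / 2 + 1)) with hc
  have hcpos : 0 < c := by
    rw [hc]
    apply ENNReal.ofReal_pos.mpr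
    have h1 : 0 < Real.sqrt Real.pi ^ 4 := by positivity
    have h2 : 0 < Real.Gamma (4 / 2 + 1) := by
      apply Real.Gamma_pos_of_pos; norm_num
    positivity
  have hvol : ∀ (x : EuclideanSpace ℝ (Fin 4)) (r : ℝ), volume (Metric.ball x r)
      = (ENNReal.ofReal r) ^ 4 * c := by
    intro x r
    have := EuclideanSpace.volume_ball (Fin 4) x r
    simpa [hc] using this
  -- disjoint balls
  have hd : (s : Set α).Pairwise (Function.onFun Disjoint (fun a => Metric.ball (f a) (μ / 2))) := by
    intro a _ b _ hab
    apply Metric.ball_disjoint_ball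
    calc μ / 2 + μ / 2 = μ := by ring
    _ ≤ dist (f a) (f b) := hsep a b hab
  have hsub : (⋃ a ∈ s, Metric.ball (f a) (μ / 2)) ⊆ Metric.ball (0 : EuclideanSpace ℝ (Fin 4)) (R + μ / 2) := by
    intro x hx
    simp only [Set.mem_iUnion] at hx
    obtain ⟨a, ha, hxa⟩ := hx
    rw [Metric.mem_ball] at hxa ⊢
    calc dist x 0 ≤ dist x (f a) + dist (f a) 0 := dist_triangle _ _ _
    _ < μ / 2 + R := by
        have : dist (f a) 0 = ‖f a‖ := by simp
        rw [this]
        exact add_lt_add_of_lt_of_le hxa (le_of_lt (hR a ha))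
    _ = R + μ / 2 := by ring
  have hmeas := measure_biUnion_finset (μ := volume) hd (fun a _ => measurableSet_ball)
  have hle : ∑ a ∈ s, volume (Metric.ball (f a) (μ / 2)) ≤ (ENNReal.ofReal (R + μ / 2)) ^ 4 * c := by
    rw [← hmeas, ← hvol 0 (R + μ/2)]
    exact measure_mono hsub
  rw [Finset.sum_congr rfl (fun a _ => hvol (f a) (μ/2)), Finset.sum_const, nsmul_eq_mul] at hle
  -- cancel c and convert to ℝ
  have h2 : (s.card : ENNReal) * (ENNReal.ofReal (μ/2)) ^ 4 ≤ (ENNReal.ofReal (R + μ / 2)) ^ 4 :=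
    (ENNReal.mul_le_mul_iff_left hcpos.ne' (by simp [hc])).mp (by rwa [← mul_assoc] at hle)
  have h3 : ((s.card : ℝ) * (μ / 2) ^ 4 : ℝ) ≤ ((R + μ / 2) ^ 4 : ℝ) := by
    have hμ2 : (0:ℝ) ≤ μ / 2 := by positivity
    have hR2 : (0:ℝ) ≤ R + μ / 2 := by positivity
    have := ENNReal.toReal_mono (by simp) h2
    rw [ENNReal.toReal_mul, ENNReal.toReal_pow, ENNReal.toReal_pow,
      ENNReal.toReal_ofReal hμ2, ENNReal.toReal_ofReal hR2] at this
    simpa using this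
  exact h3

/-- Theta-series bound for a μ-separated family with all norms ≥ μ ≥ 2. -/
lemma theta_bound {α : Type*} (f : α → EuclideanSpace ℝ (Fin 4)) (μ : ℝ) (hμ : 2 ≤ μ)
    (hsep : ∀ a b, a ≠ b → μ ≤ dist (f a) (f b)) (hnorm : ∀ a, μ ≤ ‖f a‖) :
    Summable (fun a => Real.exp (-Real.pi * ‖f a‖ ^ 2)) ∧
      ∑' a, Real.exp (-Real.pi * ‖f a‖ ^ 2) ≤ 257 * Real.exp (-Real.pi * μ ^ 2) := by
  classical
  have hμ0 : 0 < μ := lt_of_lt_of_le two_pos hμ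
  set sh : α → ℕ := fun a => ⌊‖f a‖ - μ⌋₊ with hsh
  have hsh_le : ∀ a, μ + sh a ≤ ‖f a‖ := by
    intro a
    have h0 : 0 ≤ ‖f a‖ - μ := by linarith [hnorm a]
    have := Nat.floor_le h0
    simp only [hsh]; linarith
  have hsh_lt : ∀ a, ‖f a‖ < μ + sh a + 1 := by
    intro a
    have := Nat.lt_floor_add_one (‖f a‖ - μ)
    simp only [hsh]; linarith
  -- cardinality bound for finsets inside a shell
  set M : ℕ → ℕ := fun k => (k + 4) ^ 4 with hM
  have hcard : ∀ (k : ℕ) (s : Finset α), (∀ a ∈ s, sh a = k) → s.card ≤ M k := by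
    intro k s hs
    have hb := packing_count s f μ (μ + k + 1) hμ0 hsep (fun a ha => by
      have := hsh_lt a; rw [hs a ha] at this; linarith)
    have key : (s.card : ℝ) ≤ ((k : ℝ) + 4) ^ 4 := by
      have hμ2 : (0:ℝ) < (μ / 2) ^ 4 := by positivity
      rw [← le_div_iff₀ hμ2] at hb
      refine hb.trans ?_
      rw [div_le_iff₀ hμ2]
      have h1 : μ + k + 1 + μ / 2 ≤ ((k : ℝ) + 4) * (μ / 2) := by nlinarith [Nat.cast_nonneg (α := ℝ) k]
      calc (μ + ↑k + 1 + μ / 2) ^ 4 ≤ (((k : ℝ) + 4) * (μ / 2)) ^ 4 := by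
            apply pow_le_pow_left₀ (by positivity) h1
      _ = ((k : ℝ) + 4) ^ 4 * (μ / 2) ^ 4 := by ring
    have : (s.card : ℝ) ≤ ((M k : ℕ) : ℝ) := by
      rw [hM]; push_cast; exact key
    exact_mod_cast this
  -- each shell is finite
  have hfin : ∀ k : ℕ, (setOf (fun a => sh a = k)).Finite := by
    intro k
    by_contra hinf
    obtain ⟨t, hts, htc⟩ := Set.Infinite.exists_subset_card_eq hinf (M k + 1)
    have := hcard k t (fun a ha => hts ha)
    omega
  -- indexing within shells
  set T : ℕ → Finset α := fun k => (hfin k).toFinset with hT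
  have hTmem : ∀ a, a ∈ T (sh a) := by intro a; simp [hT]; rfl
  have hTcard : ∀ k, (T k).card ≤ M k := by
    intro k; exact hcard k (T k) (fun a ha => by simp [hT] at ha; exact ha)
  set idx : α → ℕ := fun a => (T (sh a)).toList.idxOf a with hidx
  set ι : α → ℕ × ℕ := fun a => (sh a, idx a) with hι
  have hι_inj : Function.Injective ι := by
    intro a b hab
    have h1 : sh a = sh b := congrArg Prod.fst hab
    have h2 : idx a = idx b := congrArg Prod.snd hab
    have ha : a ∈ (T (sh a)).toList := by rw [Finset.mem_toList]; exact hTmem a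
    have hb : b ∈ (T (sh a)).toList := by rw [Finset.mem_toList, h1]; exact hTmem b
    rw [hidx] at h2; simp only at h2
    rw [← h1] at h2
    exact (List.idxOf_inj ha).mp h2
  have hidx_lt : ∀ a, idx a < M (sh a) := by
    intro a
    have h1 : idx a < (T (sh a)).toList.length :=
      List.idxOf_lt_length_iff.mpr (by rw [Finset.mem_toList]; exact hTmem a)
    rw [Finset.length_toList] at h1
    exact lt_of_lt_of_le h1 (hTcard _)
  -- majorant
  set h : ℕ × ℕ → ℝ := fun p => if p.2 < M p.1 then Real.exp (-Real.pi * (μ + p.1) ^ 2) else 0 with hh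
  have hh_nonneg : ∀ p, 0 ≤ h p := by
    intro p; rw [hh]; dsimp only; split <;> [exact (Real.exp_pos _).le; exact le_rfl]
  have hle_h : ∀ a, Real.exp (-Real.pi * ‖f a‖ ^ 2) ≤ h (ι a) := by
    intro a
    rw [hh, hι]; simp only
    rw [if_pos (hidx_lt a)]
    apply Real.exp_le_exp.mpr
    have h1 : (0:ℝ) ≤ μ + sh a := by positivity
    have h2 := hsh_le a
    have hsq : (μ + (sh a : ℝ)) ^ 2 ≤ ‖f a‖ ^ 2 := by nlinarith
    have := mul_le_mul_of_nonneg_left hsq Real.pi_pos.le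
    linarith
  -- summability of majorant
  have hinner : ∀ k : ℕ, Summable (fun j => h (k, j)) := by
    intro k
    apply summable_of_ne_finset_zero (s := Finset.range (M k))
    intro j hj
    rw [hh]; simp only
    rw [if_neg (by simpa using hj)]
  have hinner_sum : ∀ k : ℕ, ∑' j : ℕ, h (k, j) = (M k : ℝ) * Real.exp (-Real.pi * (μ + k) ^ 2) := by
    intro k
    rw [tsum_eq_sum (s := Finset.range (M k)) (fun j hj => by rw [hh]; simp only; rw [if_neg (by simpa using hj)])]
    have heq : ∀ j ∈ Finset.range (M k), h (k, j) = Real.exp (-Real.pi * (μ + k) ^ 2) := by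
      intro j hj; rw [hh]; simp only; rw [if_pos (by simpa using hj)]
    rw [Finset.sum_congr rfl heq, Finset.sum_const, nsmul_eq_mul, Finset.card_range]
  -- geometric bound for the outer sum
  have houter_le : ∀ k : ℕ, (M k : ℝ) * Real.exp (-Real.pi * (μ + k) ^ 2)
      ≤ 256 * Real.exp (-Real.pi * μ ^ 2) * Real.exp (-11 : ℝ) ^ k := by
    intro k
    have hM4 : (M k : ℝ) = ((k : ℝ) + 4) ^ 4 := by rw [hM]; push_cast; ring
    have h1 : ((k : ℝ) + 4) ^ 4 ≤ 256 * Real.exp (1 : ℝ) ^ k := by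
      have e1 : (1 : ℝ) + (k : ℝ) / 4 ≤ Real.exp ((k : ℝ) / 4) := by
        have := Real.add_one_le_exp ((k : ℝ) / 4); linarith
      have e2 : ((1 : ℝ) + (k : ℝ) / 4) ^ 4 ≤ Real.exp ((k : ℝ) / 4) ^ 4 := by
        apply pow_le_pow_left₀ (by positivity) e1
      have e3 : Real.exp ((k : ℝ) / 4) ^ 4 = Real.exp (k : ℝ) := by
        rw [← Real.exp_nat_mul]
        congr 1; push_cast; ring
      have e4 : Real.exp (k : ℝ) = Real.exp 1 ^ k := by
        rw [← Real.exp_nat_mul]; congr 1; push_cast; ring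
      calc ((k : ℝ) + 4) ^ 4 = 256 * ((1 : ℝ) + (k : ℝ) / 4) ^ 4 := by ring
      _ ≤ 256 * Real.exp ((k : ℝ)/4) ^ 4 := by linarith
      _ = 256 * Real.exp 1 ^ k := by rw [e3, e4]
    have h2 : Real.exp (-Real.pi * (μ + k) ^ 2) ≤ Real.exp (-Real.pi * μ ^ 2) * Real.exp (-12 : ℝ) ^ k := by
      rw [← Real.exp_nat_mul, ← Real.exp_add]
      apply Real.exp_le_exp.mpr
      have hπ : (3 : ℝ) ≤ Real.pi := Real.pi_gt_three.le
      have hk0 : (0:ℝ) ≤ (k : ℝ) := Nat.cast_nonneg k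
      have h4 : (4:ℝ) * k ≤ 2 * μ * (k:ℝ) + (k:ℝ) ^ 2 := by nlinarith
      have h5 : (3:ℝ) * ((4:ℝ) * k) ≤ Real.pi * (2 * μ * (k:ℝ) + (k:ℝ) ^ 2) :=
        mul_le_mul hπ h4 (by positivity) Real.pi_pos.le
      have expand : -Real.pi * (μ + (k:ℝ)) ^ 2
          = -Real.pi * μ ^ 2 - Real.pi * (2 * μ * (k:ℝ) + (k:ℝ) ^ 2) := by ring
      rw [expand]; push_cast; linarith
    calc (M k : ℝ) * Real.exp (-Real.pi * (μ + k) ^ 2)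
        ≤ (256 * Real.exp 1 ^ k) * (Real.exp (-Real.pi * μ ^ 2) * Real.exp (-12:ℝ) ^ k) := by
          apply mul_le_mul (by rw [hM4]; exact h1) h2 (Real.exp_pos _).le (by positivity)
    _ = 256 * Real.exp (-Real.pi * μ ^ 2) * (Real.exp 1 * Real.exp (-12:ℝ)) ^ k := by ring
    _ = 256 * Real.exp (-Real.pi * μ ^ 2) * Real.exp (-11:ℝ) ^ k := by rw [← Real.exp_add]; norm_num
  have hgeo : Summable (fun k : ℕ => 256 * Real.exp (-Real.pi * μ ^ 2) * Real.exp (-11 : ℝ) ^ k) := by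
    apply Summable.mul_left
    apply summable_geometric_of_lt_one (Real.exp_pos _).le
    exact Real.exp_lt_one_iff.mpr (by norm_num)
  have houter : Summable (fun k : ℕ => (M k : ℝ) * Real.exp (-Real.pi * (μ + k) ^ 2)) := by
    apply Summable.of_nonneg_of_le (fun k => by positivity) houter_le hgeo
  have hhsum : Summable h := by
    apply (summable_prod_of_nonneg hh_nonneg).mpr
    constructor
    · intro k; exact hinner k
    · apply houter.congr
      intro k
      exact (hinner_sum k).symm
  have hfsum : Summable (fun a => Real.exp (-Real.pi * ‖f a‖ ^ 2)) := by
    apply Summable.of_nonneg_of_le (fun a => (Real.exp_pos _).le) hle_h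
    exact hhsum.comp_injective hι_inj
  refine ⟨hfsum, ?_⟩
  have step1 : ∑' a, Real.exp (-Real.pi * ‖f a‖ ^ 2) ≤ ∑' p, h p :=
    Summable.tsum_le_tsum_of_inj ι hι_inj (fun p _ => hh_nonneg p) hle_h hfsum hhsum
  have step2 : ∑' p, h p = ∑' k : ℕ, ∑' j : ℕ, h (k, j) := Summable.tsum_prod' hhsum hinner
  have step3 : ∑' k : ℕ, ∑' j : ℕ, h (k, j) ≤ 256 * Real.exp (-Real.pi * μ ^ 2) * (1 - Real.exp (-11:ℝ))⁻¹ := by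
    calc ∑' k : ℕ, ∑' j : ℕ, h (k, j) ≤ ∑' k : ℕ, 256 * Real.exp (-Real.pi * μ ^ 2) * Real.exp (-11:ℝ) ^ k := by
          apply Summable.tsum_le_tsum _ (by apply houter.congr; intro k; exact (hinner_sum k).symm) hgeo
          intro k; rw [hinner_sum k]; exact houter_le k
    _ = 256 * Real.exp (-Real.pi * μ ^ 2) * ∑' k : ℕ, Real.exp (-11:ℝ) ^ k := by rw [tsum_mul_left]
    _ = 256 * Real.exp (-Real.pi * μ ^ 2) * (1 - Real.exp (-11:ℝ))⁻¹ := by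
          rw [tsum_geometric_of_lt_one (Real.exp_pos _).le (Real.exp_lt_one_iff.mpr (by norm_num))]
  have step4 : 256 * Real.exp (-Real.pi * μ ^ 2) * (1 - Real.exp (-11:ℝ))⁻¹ ≤ 257 * Real.exp (-Real.pi * μ ^ 2) := by
    have hexp11 : (257 : ℝ) ≤ Real.exp 11 := by
      have h2e : (2 : ℝ) ≤ Real.exp 1 := by
        have := Real.add_one_le_exp (1:ℝ); linarith
      calc (257:ℝ) ≤ 2 ^ 11 := by norm_num
      _ ≤ Real.exp 1 ^ 11 := by apply pow_le_pow_left₀ (by norm_num) h2e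
      _ = Real.exp 11 := by rw [← Real.exp_nat_mul]; congr 1; push_cast; ring
    have hx : Real.exp (-11 : ℝ) ≤ 1 / 257 := by
      rw [Real.exp_neg]
      rw [inv_le_comm₀ (Real.exp_pos _) (by norm_num)]
      calc ((1:ℝ)/257)⁻¹ = 257 := by norm_num
      _ ≤ Real.exp 11 := hexp11
    have h1 : (0:ℝ) < 1 - Real.exp (-11:ℝ) := by
      have := Real.exp_lt_one_iff.mpr (show (-11:ℝ) < 0 by norm_num); linarith
    have hX : (0:ℝ) ≤ Real.exp (-Real.pi * μ ^ 2) := (Real.exp_pos _).le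
    rw [mul_comm (256 * Real.exp (-Real.pi * μ ^ 2)) _]
    rw [inv_mul_le_iff₀ h1]
    nlinarith [mul_le_mul_of_nonneg_right hx hX]
  calc ∑' a, Real.exp (-Real.pi * ‖f a‖ ^ 2) ≤ ∑' p, h p := step1
  _ = ∑' k : ℕ, ∑' j : ℕ, h (k, j) := step2
  _ ≤ 256 * Real.exp (-Real.pi * μ ^ 2) * (1 - Real.exp (-11:ℝ))⁻¹ := step3
  _ ≤ 257 * Real.exp (-Real.pi * μ ^ 2) := step4

/-- With exactly two complex places, `absN` is the absolute norm. -/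
lemma absN_eq_norm (F : Type*) [Field F] [NumberField F]
    (hquartic : Module.finrank ℚ F = 4)
    (σ σ' : F →+* ℂ) (hplaces : InfinitePlace.mk σ ≠ InfinitePlace.mk σ')
    (hσ : ¬ComplexEmbedding.IsReal σ) (hσ' : ¬ComplexEmbedding.IsReal σ')
    (x : F) : absN σ σ' x = |Algebra.norm ℚ x| := by
  classical
  set w := InfinitePlace.mk σ with hw
  set w' := InfinitePlace.mk σ' with hw'
  have hwc : w.IsComplex := by
    rw [hw, InfinitePlace.isComplex_mk_iff]; exact hσ
  have hwc' : w'.IsComplex := by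
    rw [hw', InfinitePlace.isComplex_mk_iff]; exact hσ'
  have hmult : w.mult = 2 := by
    rw [InfinitePlace.mult, if_neg (InfinitePlace.not_isReal_iff_isComplex.mpr hwc)]
  have hmult' : w'.mult = 2 := by
    rw [InfinitePlace.mult, if_neg (InfinitePlace.not_isReal_iff_isComplex.mpr hwc')]
  have huniv : (Finset.univ : Finset (InfinitePlace F)) = {w, w'} := by
    have hsum := InfinitePlace.sum_mult_eq (K := F)
    rw [hquartic] at hsum
    have hsub : ({w, w'} : Finset (InfinitePlace F)) ⊆ Finset.univ := Finset.subset_univ _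
    have hpair : ∑ v ∈ ({w, w'} : Finset (InfinitePlace F)), v.mult = 4 := by
      rw [Finset.sum_pair hplaces, hmult, hmult']
    have hsdiff := Finset.sum_sdiff (f := InfinitePlace.mult) hsub
    have hzero : ∑ v ∈ Finset.univ \ {w, w'}, v.mult = 0 := by omega
    have hempty : Finset.univ \ ({w, w'} : Finset (InfinitePlace F)) = ∅ := by
      by_contra hne
      obtain ⟨v, hv⟩ := Finset.nonempty_iff_ne_empty.mpr hne
      have h1 : 0 < v.mult := InfinitePlace.mult_pos
      have h2 : v.mult ≤ ∑ u ∈ Finset.univ \ {w, w'}, u.mult :=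
        Finset.single_le_sum (fun u _ => Nat.zero_le _) hv
      omega
    have := Finset.sdiff_eq_empty_iff_subset.mp hempty
    exact Finset.Subset.antisymm this hsub
  have hprod := InfinitePlace.prod_eq_abs_norm x
  rw [huniv, Finset.prod_pair hplaces, hmult, hmult'] at hprod
  have happ : w x = ‖σ x‖ := InfinitePlace.apply σ x
  have happ' : w' x = ‖σ' x‖ := InfinitePlace.apply σ' x
  rw [happ, happ'] at hprod
  rw [absN]
  rw [show ‖σ x‖ ^ 2 * ‖σ' x‖ ^ 2
    = ‖σ x‖ ^ (2:ℕ) * ‖σ' x‖ ^ (2:ℕ) by norm_num] at *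
  rw [hprod]

/-- Nonreal-ness of σ from hKim. -/
lemma not_isReal_of_K (F K : Type*) [Field F] [NumberField F] [Field K] [NumberField K]
    [Algebra K F] (hKim : ∀ φ : K →+* ℂ, ∃ x, (φ x).im ≠ 0) (σ : F →+* ℂ) :
    ¬ComplexEmbedding.IsReal σ := by
  intro hreal
  obtain ⟨x, hx⟩ := hKim (σ.comp (algebraMap K F))
  apply hx
  have := ComplexEmbedding.isReal_iff.mp hreal
  have h2 : (starRingEnd ℂ) (σ (algebraMap K F x)) = σ (algebraMap K F x) := by
    conv_rhs => rw [← this]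
    rfl
  have := Complex.conj_eq_iff_im.mp h2
  simpa using this

/-- Key norm bound: nonzero elements of a fractional ideal. -/
lemma norm_lower_bound (F : Type*) [Field F] [NumberField F]
    (I : FractionalIdeal (𝓞 F)⁰ F) (hI0 : I ≠ 0)
    (x : F) (hx : x ∈ I) (hx0 : x ≠ 0) :
    ∃ n : ℕ, 0 < n ∧ (|Algebra.norm ℚ x| : ℚ) = FractionalIdeal.absNorm I * n ∧
      (FractionalIdeal.spanSingleton (𝓞 F)⁰ x ≠ I → 2 ≤ n) := by
  classical
  set J := FractionalIdeal.spanSingleton (𝓞 F)⁰ x * I⁻¹ with hJ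
  have hxI : FractionalIdeal.spanSingleton (𝓞 F)⁰ x ≤ I :=
    (FractionalIdeal.spanSingleton_le_iff_mem).mpr hx
  have hJle : J ≤ 1 := by
    rw [hJ]
    calc FractionalIdeal.spanSingleton (𝓞 F)⁰ x * I⁻¹ ≤ I * I⁻¹ :=
      mul_le_mul_left hxI I⁻¹
    _ = 1 := mul_inv_cancel₀ hI0
  obtain ⟨J₀, hJ₀⟩ := FractionalIdeal.le_one_iff_exists_coeIdeal.mp hJle
  have hprod : FractionalIdeal.spanSingleton (𝓞 F)⁰ x = I * J := by
    have h1 : I * (FractionalIdeal.spanSingleton (𝓞 F)⁰ x * I⁻¹)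
        = FractionalIdeal.spanSingleton (𝓞 F)⁰ x * (I * I⁻¹) := by ring
    rw [hJ, h1, mul_inv_cancel₀ hI0, mul_one]
  have hJ0 : J ≠ 0 := by
    rw [hJ]
    apply mul_ne_zero
    · exact FractionalIdeal.spanSingleton_ne_zero_iff.mpr hx0
    · exact inv_ne_zero hI0
  refine ⟨Ideal.absNorm J₀, ?_, ?_, ?_⟩
  · rw [pos_iff_ne_zero]
    intro h
    apply hJ0
    rw [← hJ₀]
    rw [Ideal.absNorm_eq_zero_iff.mp h]
    simp
  · rw [← FractionalIdeal.absNorm_span_singleton (𝓞 F) x] at *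
    rw [hprod, map_mul, ← hJ₀, FractionalIdeal.coeIdeal_absNorm]
  · intro hne
    have hJne1 : J ≠ 1 := by
      intro h
      apply hne
      rw [hprod, h, mul_one]
    have h1 : Ideal.absNorm J₀ ≠ 1 := by
      intro h
      apply hJne1
      rw [← hJ₀, Ideal.absNorm_eq_one_iff.mp h]
      simp
    have h0 : Ideal.absNorm J₀ ≠ 0 := by
      intro h
      apply hJ0
      rw [← hJ₀, Ideal.absNorm_eq_zero_iff.mp h]
      simp
    omega

def vmap {F : Type*} [Field F] (σ σ' : F →+* ℂ) (u₁ u₂ : ℝ) (x : F) :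
    EuclideanSpace ℝ (Fin 4) :=
  (WithLp.equiv 2 (Fin 4 → ℝ)).symm
    ![Real.sqrt 2 * u₁ * (σ x).re, Real.sqrt 2 * u₁ * (σ x).im,
      Real.sqrt 2 * u₂ * (σ' x).re, Real.sqrt 2 * u₂ * (σ' x).im]

lemma vmap_norm_sq {F : Type*} [Field F] (σ σ' : F →+* ℂ) (u₁ u₂ : ℝ) (x : F) :
    ‖vmap σ σ' u₁ u₂ x‖ ^ 2 = normSq2 σ σ' u₁ u₂ x := by
  have h2 : Real.sqrt 2 ^ 2 = 2 := Real.sq_sqrt (by norm_num)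
  rw [EuclideanSpace.norm_eq, Real.sq_sqrt (by positivity)]
  simp only [vmap, WithLp.equiv_symm_apply, PiLp.toLp_apply, Real.norm_eq_abs, sq_abs, Fin.sum_univ_four,
    Matrix.cons_val_zero, Matrix.cons_val_one, Matrix.head_cons, Matrix.cons_val_two,
    Matrix.tail_cons, Matrix.cons_val_three, Matrix.head_fin_const]
  rw [normSq2, Complex.sq_norm, Complex.sq_norm, Complex.normSq_apply, Complex.normSq_apply]
  linear_combination (u₁^2*(σ x).re^2 + u₁^2*(σ x).im^2 + u₂^2*(σ' x).re^2 + u₂^2*(σ' x).im^2) * h2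

lemma vmap_sub {F : Type*} [Field F] (σ σ' : F →+* ℂ) (u₁ u₂ : ℝ) (x y : F) :
    vmap σ σ' u₁ u₂ (x - y) = vmap σ σ' u₁ u₂ x - vmap σ σ' u₁ u₂ y := by
  ext i
  have : (vmap σ σ' u₁ u₂ x - vmap σ σ' u₁ u₂ y) i = vmap σ σ' u₁ u₂ x i - vmap σ σ' u₁ u₂ y i := rfl
  rw [this]
  fin_cases i <;>
    simp [vmap, WithLp.equiv_symm_apply, PiLp.toLp_apply, map_sub, Complex.sub_re, Complex.sub_im] <;> ring

lemma normSq2_ge {F : Type*} [Field F] (σ σ' : F →+* ℂ) (u₁ u₂ c N : ℝ)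
    (hu₁ : 0 < u₁) (hu₂ : 0 < u₂) (hc : 0 ≤ c) (hN : 0 < N)
    (hdeg : u₁ ^ 2 * u₂ ^ 2 * N = 1) (x : F)
    (hx : c * N ≤ absN σ σ' x) : 4 * Real.sqrt c ≤ normSq2 σ σ' u₁ u₂ x := by
  set A := ‖σ x‖ with hA
  set B := ‖σ' x‖ with hB
  have hA0 : 0 ≤ A := norm_nonneg _
  have hB0 : 0 ≤ B := norm_nonneg _
  have step1 : 4 * u₁ * u₂ * (A * B) ≤ normSq2 σ σ' u₁ u₂ x := by
    rw [normSq2, ← hA, ← hB]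
    nlinarith [sq_nonneg (u₁ * A - u₂ * B)]
  have hsqrtN : 0 < Real.sqrt N := Real.sqrt_pos.mpr hN
  have step5 : u₁ * u₂ * Real.sqrt N = 1 := by
    set t := u₁ * u₂ * Real.sqrt N with ht
    have ht0 : 0 < t := by positivity
    have htsq : t ^ 2 = 1 := by
      rw [ht]
      have : (u₁ * u₂ * Real.sqrt N) ^ 2 = u₁ ^ 2 * u₂ ^ 2 * (Real.sqrt N ^ 2) := by ring
      rw [this, Real.sq_sqrt hN.le, hdeg]
    have hfac : (t - 1) * (t + 1) = 0 := by nlinarith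
    rcases mul_eq_zero.mp hfac with h | h
    · linarith
    · linarith
  have step2 : Real.sqrt c * Real.sqrt N ≤ A * B := by
    have h1 : Real.sqrt (c * N) ≤ Real.sqrt (A ^ 2 * B ^ 2) := Real.sqrt_le_sqrt hx
    rw [Real.sqrt_mul hc] at h1
    have h2 : Real.sqrt (A ^ 2 * B ^ 2) = A * B := by
      rw [show A ^ 2 * B ^ 2 = (A * B) ^ 2 by ring, Real.sqrt_sq (by positivity)]
    linarith [h1.trans_eq h2]
  calc 4 * Real.sqrt c = 4 * Real.sqrt c * (u₁ * u₂ * Real.sqrt N) := by rw [step5]; ring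
  _ = 4 * u₁ * u₂ * (Real.sqrt c * Real.sqrt N) := by ring
  _ ≤ 4 * u₁ * u₂ * (A * B) := by
      apply mul_le_mul_of_nonneg_left step2 (by positivity)
  _ ≤ normSq2 σ σ' u₁ u₂ x := step1

/-- One side: summability and bound for the sum over the nonzero part of an ideal. -/
lemma side {F : Type*} [Field F] [NumberField F] (σ σ' : F →+* ℂ) (u₁ u₂ : ℝ)
    (Itot : FractionalIdeal (𝓞 F)⁰ F) (μ : ℝ) (hμ : 2 ≤ μ)
    (hlb : ∀ x : F, x ∈ Itot → x ≠ 0 → μ ^ 2 ≤ normSq2 σ σ' u₁ u₂ x) :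
    Summable (fun a : {y : (Itot : Submodule (𝓞 F) F) // (y : F) ≠ 0} =>
        Real.exp (-Real.pi * normSq2 σ σ' u₁ u₂ (a : F))) ∧
      ∑' a : {y : (Itot : Submodule (𝓞 F) F) // (y : F) ≠ 0},
        Real.exp (-Real.pi * normSq2 σ σ' u₁ u₂ (a : F))
        ≤ 257 * Real.exp (-Real.pi * μ ^ 2) := by
  have hμ0 : (0:ℝ) ≤ μ := by linarith
  set f : {y : (Itot : Submodule (𝓞 F) F) // (y : F) ≠ 0} → EuclideanSpace ℝ (Fin 4) :=
    fun a => vmap σ σ' u₁ u₂ ((a : (Itot : Submodule (𝓞 F) F)) : F) with hf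
  have hnormsq : ∀ x : F, x ∈ Itot → x ≠ 0 → μ ≤ ‖vmap σ σ' u₁ u₂ x‖ := by
    intro x hx hx0
    have h1 := hlb x hx hx0
    rw [← vmap_norm_sq] at h1
    nlinarith [norm_nonneg (vmap σ σ' u₁ u₂ x)]
  have hmem : ∀ a : {y : (Itot : Submodule (𝓞 F) F) // (y : F) ≠ 0}, ((a : (Itot : Submodule (𝓞 F) F)) : F) ∈ Itot := by
    intro a
    exact FractionalIdeal.mem_coe.mp (a : (Itot : Submodule (𝓞 F) F)).2
  have hnorm : ∀ a, μ ≤ ‖f a‖ := fun a => hnormsq _ (hmem a) a.2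
  have hsep : ∀ a b, a ≠ b → μ ≤ dist (f a) (f b) := by
    intro a b hab
    set x : F := ((a : (Itot : Submodule (𝓞 F) F)) : F)
    set y : F := ((b : (Itot : Submodule (𝓞 F) F)) : F)
    have hxy : x - y ≠ 0 := by
      intro h
      apply hab
      have : x = y := by linear_combination h
      exact Subtype.ext (Subtype.ext this)
    have hxyI : x - y ∈ Itot := by
      have hx := hmem a
      have hy := hmem b
      exact Submodule.sub_mem _ (FractionalIdeal.mem_coe.mpr hx) (FractionalIdeal.mem_coe.mpr hy)
        |> FractionalIdeal.mem_coe.mp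
    rw [dist_eq_norm, hf]
    simp only
    rw [← vmap_sub]
    exact hnormsq _ hxyI hxy
  obtain ⟨hsum, hbound⟩ := theta_bound f μ hμ hsep hnorm
  have heq : ∀ a, Real.exp (-Real.pi * ‖f a‖ ^ 2)
      = Real.exp (-Real.pi * normSq2 σ σ' u₁ u₂ (a : F)) := by
    intro a
    rw [vmap_norm_sq]
  constructor
  · exact hsum.congr heq
  · calc ∑' a : {y : (Itot : Submodule (𝓞 F) F) // (y : F) ≠ 0},
        Real.exp (-Real.pi * normSq2 σ σ' u₁ u₂ (a : F))
        = ∑' a, Real.exp (-Real.pi * ‖f a‖ ^ 2) := tsum_congr (fun a => (heq a).symm)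
    _ ≤ 257 * Real.exp (-Real.pi * μ ^ 2) := hbound

/-- Decomposition of k0 into zero term plus nonzero part. -/
lemma k0_decomp {F : Type*} [Field F] [NumberField F] (σ σ' : F →+* ℂ) (u₁ u₂ : ℝ)
    (Itot : FractionalIdeal (𝓞 F)⁰ F)
    (hsum : Summable (fun a : {y : (Itot : Submodule (𝓞 F) F) // (y : F) ≠ 0} =>
        Real.exp (-Real.pi * normSq2 σ σ' u₁ u₂ (a : F)))) :
    k0 σ σ' Itot u₁ u₂ = 1 + ∑' a : {y : (Itot : Submodule (𝓞 F) F) // (y : F) ≠ 0},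
        Real.exp (-Real.pi * normSq2 σ σ' u₁ u₂ (a : F)) := by
  classical
  set SI := (Itot : Submodule (𝓞 F) F)
  set g : SI → ℝ := fun x => Real.exp (-Real.pi * normSq2 σ σ' u₁ u₂ x) with hg
  set s : Set SI := {y : SI | (y : F) ≠ 0} with hs
  have hcompl : sᶜ = {(0 : SI)} := by
    ext y
    simp only [hs, Set.mem_compl_iff, Set.mem_setOf_eq, not_not, Set.mem_singleton_iff]
    exact ⟨fun h => by ext; exact h, fun h => by rw [h]; rfl⟩
  have hsumc : Summable (fun x : ↥sᶜ => g ↑x) := by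
    haveI : Finite ↥sᶜ := by rw [hcompl]; exact (Set.finite_singleton _).to_subtype
    exact Summable.of_finite
  have hsums : Summable (fun x : ↥s => g ↑x) := hsum
  have htot := Summable.tsum_add_tsum_compl (f := g) hsums hsumc
  have hzero : ∑' x : ↥sᶜ, g ↑x = 1 := by
    rw [hcompl, tsum_singleton]
    have h0 : ((0 : SI) : F) = 0 := rfl
    rw [hg]
    simp only [h0]
    rw [show normSq2 σ σ' u₁ u₂ (0:F) = 0 by simp [normSq2]]
    simp
  have key : (∑' x : SI, g x) = 1 + ∑' x : ↥s, g ↑x := by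
    rw [← htot, hzero]; ring
  exact key

theorem stmt6
    (F K : Type*) [Field F] [NumberField F] [Field K] [NumberField K]
    [Algebra K F] [IsScalarTower ℚ K F]
    (hquartic : Module.finrank ℚ F = 4)
    (hquad : Module.finrank K F = 2)
    (hKim : ∀ φ : K →+* ℂ, ∃ x, (φ x).im ≠ 0)
    (σ σ' : F →+* ℂ)
    (hplaces : InfinitePlace.mk σ ≠ InfinitePlace.mk σ')
    (I : FractionalIdeal (𝓞 F)⁰ F)
    (hnp : ∀ f : F, I ≠ FractionalIdeal.spanSingleton (𝓞 F)⁰ f)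
    (u₁ u₂ : ℝ) (hu₁ : 0 < u₁) (hu₂ : 0 < u₂)
    (hdeg : u₁ ^ 2 * u₂ ^ 2 * (FractionalIdeal.absNorm I : ℝ) = 1) :
    k0 σ σ' I u₁ u₂ < k0 σ σ' 1 1 1 := by
  classical
  have hσ : ¬ComplexEmbedding.IsReal σ := not_isReal_of_K F K hKim σ
  have hσ' : ¬ComplexEmbedding.IsReal σ' := not_isReal_of_K F K hKim σ'
  have habsN : ∀ x : F, absN σ σ' x = |Algebra.norm ℚ x| :=
    absN_eq_norm F hquartic σ σ' hplaces hσ hσ'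
  have hI0 : I ≠ 0 := by
    intro h
    exact hnp 0 (by rw [h, FractionalIdeal.spanSingleton_zero])
  set N : ℝ := (FractionalIdeal.absNorm I : ℝ) with hN
  have hNpos : 0 < N := by
    by_contra hle
    push_neg at hle
    nlinarith [mul_pos (pow_pos hu₁ 2) (pow_pos hu₂ 2),
      mul_nonneg (mul_pos (pow_pos hu₁ 2) (pow_pos hu₂ 2)).le (neg_nonneg.mpr hle)]
  -- μ₁
  set μ₁ : ℝ := Real.sqrt (4 * Real.sqrt 2) with hμ₁def
  have hsqrt2 : (1:ℝ) ≤ Real.sqrt 2 := by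
    nlinarith [Real.sq_sqrt (show (0:ℝ) ≤ 2 by norm_num), Real.sqrt_nonneg 2]
  have hμ₁sq : μ₁ ^ 2 = 4 * Real.sqrt 2 := Real.sq_sqrt (by positivity)
  have hμ₁ : 2 ≤ μ₁ := by
    have h4 : Real.sqrt 4 ≤ μ₁ := Real.sqrt_le_sqrt (by linarith)
    have : Real.sqrt 4 = 2 := by
      rw [show (4:ℝ) = 2 ^ 2 by norm_num, Real.sqrt_sq (by norm_num)]
    linarith
  -- lower bound for LHS
  have hlb₁ : ∀ x : F, x ∈ I → x ≠ 0 → μ₁ ^ 2 ≤ normSq2 σ σ' u₁ u₂ x := by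
    intro x hx hx0
    rw [hμ₁sq]
    have h2 : 4 * Real.sqrt 2 = 4 * Real.sqrt 2 := rfl
    apply normSq2_ge σ σ' u₁ u₂ 2 N hu₁ hu₂ (by norm_num) hNpos hdeg
    obtain ⟨n, hn0, hneq, hn2⟩ := norm_lower_bound F I hI0 x hx hx0
    have hn2' : 2 ≤ n := hn2 (Ne.symm (hnp x))
    rw [habsN]
    have : ((|Algebra.norm ℚ x| : ℚ) : ℝ) = N * (n : ℝ) := by
      rw [hneq]; push_cast; ring
    rw [this]
    have h2n : (2:ℝ) ≤ (n:ℝ) := by exact_mod_cast hn2'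
    nlinarith
  obtain ⟨hsum₁, hbound₁⟩ := side σ σ' u₁ u₂ I μ₁ hμ₁ hlb₁
  -- lower bound for RHS
  have hlb₂ : ∀ x : F, x ∈ (1 : FractionalIdeal (𝓞 F)⁰ F) → x ≠ 0 →
      (2:ℝ) ^ 2 ≤ normSq2 σ σ' 1 1 x := by
    intro x hx hx0
    have h1 : (2:ℝ)^2 = 4 * Real.sqrt 1 := by rw [Real.sqrt_one]; norm_num
    rw [h1]
    apply normSq2_ge σ σ' 1 1 1 1 one_pos one_pos (by norm_num) one_pos (by norm_num)
    obtain ⟨n, hn0, hneq, _⟩ := norm_lower_bound F 1 one_ne_zero x hx hx0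
    rw [habsN]
    rw [FractionalIdeal.absNorm_one] at hneq
    have : ((|Algebra.norm ℚ x| : ℚ) : ℝ) = (n : ℝ) := by rw [hneq]; push_cast; ring
    rw [this]
    have h1n : (1:ℝ) ≤ (n:ℝ) := by exact_mod_cast hn0
    linarith
  obtain ⟨hsum₂, _⟩ := side σ σ' 1 1 (1 : FractionalIdeal (𝓞 F)⁰ F) 2 le_rfl hlb₂
  -- decompositions
  rw [k0_decomp σ σ' u₁ u₂ I hsum₁, k0_decomp σ σ' 1 1 1 hsum₂]
  -- RHS lower bound via ±1
  have hmem1 : (1:F) ∈ ((1 : FractionalIdeal (𝓞 F)⁰ F) : Submodule (𝓞 F) F) := by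
    rw [FractionalIdeal.coe_one]
    exact Submodule.one_le.mp le_rfl
  have hmemneg1 : (-1:F) ∈ ((1 : FractionalIdeal (𝓞 F)⁰ F) : Submodule (𝓞 F) F) :=
    Submodule.neg_mem _ hmem1
  set e₁ : {y : ((1 : FractionalIdeal (𝓞 F)⁰ F) : Submodule (𝓞 F) F) // (y : F) ≠ 0} :=
    ⟨⟨1, hmem1⟩, one_ne_zero⟩ with he₁
  set e₂ : {y : ((1 : FractionalIdeal (𝓞 F)⁰ F) : Submodule (𝓞 F) F) // (y : F) ≠ 0} :=
    ⟨⟨-1, hmemneg1⟩, by simp⟩ with he₂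
  have hne : e₁ ≠ e₂ := by
    intro h
    have h1 : (1:F) = -1 := congrArg (fun z => z.1.1) h
    have h2 : (2:F) = 0 := by linear_combination h1
    exact two_ne_zero h2
  set g₂ : {y : ((1 : FractionalIdeal (𝓞 F)⁰ F) : Submodule (𝓞 F) F) // (y : F) ≠ 0} → ℝ :=
    fun a => Real.exp (-Real.pi * normSq2 σ σ' 1 1 (a : F)) with hg₂
  have hval1 : normSq2 σ σ' 1 1 ((e₁ : F)) = 4 := by
    simp [he₁, normSq2]; norm_num
  have hval2 : normSq2 σ σ' 1 1 ((e₂ : F)) = 4 := by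
    simp [he₂, normSq2]; norm_num
  have hsum_pair : (2:ℝ) * Real.exp (-Real.pi * 4) ≤ ∑' a, g₂ a := by
    have hfin : ∑ a ∈ ({e₁, e₂} : Finset _), g₂ a = 2 * Real.exp (-Real.pi * 4) := by
      rw [Finset.sum_pair hne, hg₂]
      simp only
      rw [hval1, hval2]
      ring
    rw [← hfin]
    apply Summable.sum_le_tsum _ (fun a _ => (Real.exp_pos _).le) hsum₂
  -- LHS upper bound and numeric comparison
  have hnum : 257 * Real.exp (-Real.pi * μ₁ ^ 2) < 2 * Real.exp (-Real.pi * 4) := by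
    rw [hμ₁sq]
    have hs2 : (1.41:ℝ) ≤ Real.sqrt 2 := by
      nlinarith [Real.sq_sqrt (show (0:ℝ) ≤ 2 by norm_num), Real.sqrt_nonneg 2]
    have hpi : (3.14:ℝ) ≤ Real.pi := by linarith [Real.pi_gt_d2]
    have hd : (5:ℝ) ≤ Real.pi * (4 * Real.sqrt 2 - 4) := by nlinarith
    have hexp5 : (143:ℝ) ≤ Real.exp (Real.pi * (4 * Real.sqrt 2 - 4)) := by
      have h27 : (2.7:ℝ) ≤ Real.exp 1 := by linarith [Real.exp_one_gt_d9]
      calc (143:ℝ) ≤ 2.7 ^ (5:ℕ) := by norm_num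
      _ ≤ Real.exp 1 ^ (5:ℕ) := pow_le_pow_left₀ (by norm_num) h27 5
      _ = Real.exp 5 := by rw [← Real.exp_nat_mul]; norm_num
      _ ≤ Real.exp (Real.pi * (4 * Real.sqrt 2 - 4)) := Real.exp_le_exp.mpr hd
    have hsplit : Real.exp (-Real.pi * (4 * Real.sqrt 2))
        = Real.exp (-Real.pi * 4) * Real.exp (-(Real.pi * (4 * Real.sqrt 2 - 4))) := by
      rw [← Real.exp_add]; congr 1; ring
    have hsmall : Real.exp (-(Real.pi * (4 * Real.sqrt 2 - 4))) ≤ 1/143 := by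
      rw [Real.exp_neg]
      rw [inv_le_comm₀ (Real.exp_pos _) (by norm_num)]
      calc ((1:ℝ)/143)⁻¹ = 143 := by norm_num
      _ ≤ Real.exp (Real.pi * (4 * Real.sqrt 2 - 4)) := hexp5
    rw [hsplit]
    nlinarith [Real.exp_pos (-Real.pi * 4), mul_le_mul_of_nonneg_left hsmall (Real.exp_pos (-Real.pi * 4)).le]
  calc 1 + ∑' a : {y : (I : Submodule (𝓞 F) F) // (y : F) ≠ 0},
        Real.exp (-Real.pi * normSq2 σ σ' u₁ u₂ (a : F))
      ≤ 1 + 257 * Real.exp (-Real.pi * μ₁ ^ 2) := by linarith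
  _ < 1 + 2 * Real.exp (-Real.pi * 4) := by linarith
  _ ≤ 1 + ∑' a, g₂ a := by linarith
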